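/- arXiv:1809.07264 — 11 statements merged into one kernel-verified Lean document; each statement's English description precedes it below -/
import Mathlib

section
/- Let G be a semigroup and V a two-sided invariant linear subspace of complex-valued functions on G (i.e., if φ ∈ V then for every y ∈ G the functions x ↦ φ(xy) and x ↦ φ(yx) belong to V). Let f, g, h : G → ℂ be linearly independent modulo V (meaning λ₁f + λ₂g + λ₃h ∈ V implies λ₁ = λ₂ = λ₃ = 0). Define ψ(x,y) = f(xy) − f(x)g(y) − g(x)f(y) − h(x)h(y). If for every y ∈ G the function x ↦ ψ(x,y) belongs to V, then there exist functions φ₁, φ₂ ∈ V such that ψ(x,y) = φ₁(x)f(y) + φ₂(x)h(y) for all x, y ∈ G. -/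
theorem stmt_0 {G : Type*} [Semigroup G] (V : Submodule ℂ (G → ℂ))
    (hV : ∀ φ ∈ V, ∀ y : G, (fun x => φ (x * y)) ∈ V ∧ (fun x => φ (y * x)) ∈ V)
    (f g h : G → ℂ)
    (hindep : ∀ l₁ l₂ l₃ : ℂ, (l₁ • f + l₂ • g + l₃ • h) ∈ V → l₁ = 0 ∧ l₂ = 0 ∧ l₃ = 0)
    (ψ : G → G → ℂ)
    (hψ : ∀ x y, ψ x y = f (x * y) - f x * g y - g x * f y - h x * h y)
    (hmem : ∀ y : G, (fun x => ψ x y) ∈ V) :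
    ∃ φ₁ φ₂ : G → ℂ, φ₁ ∈ V ∧ φ₂ ∈ V ∧
      ∀ x y : G, ψ x y = φ₁ x * f y + φ₂ x * h y := by
  -- find z₂ with h z₂ ≠ 0
  obtain ⟨z₂, hz₂⟩ : ∃ z, h z ≠ 0 := by
    by_contra hc
    push_neg at hc
    have h0 : (0:ℂ) • f + (0:ℂ) • g + (1:ℂ) • h ∈ V := by
      have he : (0:ℂ) • f + (0:ℂ) • g + (1:ℂ) • h = 0 := by
        funext x; simp [hc x]
      rw [he]; exact V.zero_mem
    exact one_ne_zero (hindep 0 0 1 h0).2.2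
  -- find z₁ with nonzero determinant
  obtain ⟨z₁, hD⟩ : ∃ z, f z * h z₂ - f z₂ * h z ≠ 0 := by
    by_contra hc
    push_neg at hc
    have h0 : (1:ℂ) • f + (0:ℂ) • g + (-(f z₂ / h z₂)) • h ∈ V := by
      have he : (1:ℂ) • f + (0:ℂ) • g + (-(f z₂ / h z₂)) • h = 0 := by
        funext x
        have hx := hc x
        simp only [Pi.add_apply, Pi.smul_apply, smul_eq_mul, Pi.zero_apply]
        field_simp
        linear_combination hx
      rw [he]; exact V.zero_mem
    exact one_ne_zero (hindep _ _ _ h0).1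
  set D : ℂ := f z₁ * h z₂ - f z₂ * h z₁ with hDdef
  set K : G → G → G → ℂ := fun y z x =>
    f z * g (x*y) + h z * h (x*y) - (g (y*z) - g y * g z) * f x
      - (f (y*z) - f y * g z) * g x - (h (y*z) - h y * g z) * h x with hKdef
  have hK : ∀ y z, K y z ∈ V := by
    intro y z
    have h1 : (fun x => ψ x (y*z)) ∈ V := hmem (y*z)
    have h2 : (fun x => ψ (x*y) z) ∈ V := (hV _ (hmem z) y).1
    have h3 : g z • (fun x => ψ x y) ∈ V := V.smul_mem _ (hmem y)
    have he : K y z = (fun x => ψ x (y*z)) - (fun x => ψ (x*y) z)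
        - g z • (fun x => ψ x y) := by
      funext x
      simp only [hKdef, Pi.sub_apply, Pi.smul_apply, smul_eq_mul, hψ, mul_assoc]
      ring
    rw [he]; exact V.sub_mem (V.sub_mem h1 h2) h3
  set A : G → ℂ := fun y =>
    h z₂ * (f (y*z₁) - f y * g z₁) - h z₁ * (f (y*z₂) - f y * g z₂) with hAdef
  set B : G → ℂ := fun y =>
    f z₁ * (f (y*z₂) - f y * g z₂) - f z₂ * (f (y*z₁) - f y * g z₁) with hBdef
  have key : ∀ y z, f z * A y + h z * B y - D * (f (y*z) - f y * g z) = 0 := by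
    intro y z
    have hN : (D • K y z - f z • (h z₂ • K y z₁ - h z₁ • K y z₂)
        - h z • (f z₁ • K y z₂ - f z₂ • K y z₁)) ∈ V := by
      refine V.sub_mem (V.sub_mem (V.smul_mem _ (hK y z))
        (V.smul_mem _ (V.sub_mem (V.smul_mem _ (hK y z₁)) (V.smul_mem _ (hK y z₂)))))
        (V.smul_mem _ (V.sub_mem (V.smul_mem _ (hK y z₂)) (V.smul_mem _ (hK y z₁))))
    have heq : D • K y z - f z • (h z₂ • K y z₁ - h z₁ • K y z₂)
        - h z • (f z₁ • K y z₂ - f z₂ • K y z₁)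
        = (f z * (h z₂ * (g (y*z₁) - g y * g z₁) - h z₁ * (g (y*z₂) - g y * g z₂))
            + h z * (f z₁ * (g (y*z₂) - g y * g z₂) - f z₂ * (g (y*z₁) - g y * g z₁))
            - D * (g (y*z) - g y * g z)) • f
          + (f z * A y + h z * B y - D * (f (y*z) - f y * g z)) • g
          + (f z * (h z₂ * (h (y*z₁) - h y * g z₁) - h z₁ * (h (y*z₂) - h y * g z₂))
            + h z * (f z₁ * (h (y*z₂) - h y * g z₂) - f z₂ * (h (y*z₁) - h y * g z₁))
            - D * (h (y*z) - h y * g z)) • h := by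
      funext x
      simp only [hKdef, hAdef, hBdef, hDdef, Pi.add_apply, Pi.sub_apply,
        Pi.smul_apply, smul_eq_mul]
      ring
    rw [heq] at hN
    exact (hindep _ _ _ hN).2.1
  have hfin : ∀ x y, ψ x y = (A x / D - g x) * f y + (B x / D - h x) * h y := by
    intro x y
    have hk := key x y
    rw [hψ]
    field_simp
    linear_combination -hk
  have hm1 : (fun x => A x / D - g x) ∈ V := by
    have him : D⁻¹ • (h z₂ • (fun x => ψ x z₁) - h z₁ • (fun x => ψ x z₂)) ∈ V :=
      V.smul_mem _ (V.sub_mem (V.smul_mem _ (hmem z₁)) (V.smul_mem _ (hmem z₂)))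
    have he : (fun x => A x / D - g x)
        = D⁻¹ • (h z₂ • (fun x => ψ x z₁) - h z₁ • (fun x => ψ x z₂)) := by
      funext x
      simp only [Pi.smul_apply, Pi.sub_apply, smul_eq_mul]
      rw [hfin x z₁, hfin x z₂]
      field_simp
      ring
    rw [he]; exact him
  have hm2 : (fun x => B x / D - h x) ∈ V := by
    have him : D⁻¹ • (f z₁ • (fun x => ψ x z₂) - f z₂ • (fun x => ψ x z₁)) ∈ V :=
      V.smul_mem _ (V.sub_mem (V.smul_mem _ (hmem z₂)) (V.smul_mem _ (hmem z₁)))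
    have he : (fun x => B x / D - h x)
        = D⁻¹ • (f z₁ • (fun x => ψ x z₂) - f z₂ • (fun x => ψ x z₁)) := by
      funext x
      simp only [Pi.smul_apply, Pi.sub_apply, smul_eq_mul]
      rw [hfin x z₁, hfin x z₂]
      field_simp
      ring
    rw [he]; exact him
  exact ⟨_, _, hm1, hm2, hfin⟩
end

section
/- Let G be a semigroup and V a two-sided invariant linear subspace of complex-valued functions on G. Let f, g, h : G → ℂ be such that f and h are linearly independent modulo V and g ∈ V. If for every y ∈ G the function x ↦ f(xy) − f(x)g(y) − g(x)f(y) − h(x)h(y) belongs to V, then g is multiplicative, i.e., g(xy) = g(x)g(y) for all x, y ∈ G. -/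
theorem stmt_1 {G : Type*} [Semigroup G] (V : Submodule ℂ (G → ℂ))
    (hV : ∀ φ ∈ V, ∀ y : G, (fun x => φ (x * y)) ∈ V ∧ (fun x => φ (y * x)) ∈ V)
    (f g h : G → ℂ)
    (hindep : ∀ l₁ l₂ : ℂ, (l₁ • f + l₂ • h) ∈ V → l₁ = 0 ∧ l₂ = 0)
    (hg : g ∈ V)
    (hmem : ∀ y : G, (fun x => f (x * y) - f x * g y - g x * f y - h x * h y) ∈ V) :
    ∀ x y : G, g (x * y) = g x * g y := by
  have key : ∀ y z : G, (fun x => f x * (g (y*z) - g y * g z)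
      + h x * (h (y*z) - h y * g z) - h (x*y) * h z) ∈ V := by
    intro y z
    have m1 := hmem (y*z)
    have m2 := (hV _ (hmem z) y).1
    have m3 := V.smul_mem (g z) (hmem y)
    have m4 := V.smul_mem (f z) ((hV g hg y).1)
    have m5 := V.smul_mem (f (y*z) - f y * g z) hg
    have comb := V.add_mem (V.sub_mem (V.add_mem (V.sub_mem m2 m1) m3) m5) m4
    convert comb using 1
    funext x
    simp only [Pi.add_apply, Pi.sub_apply, Pi.smul_apply, smul_eq_mul, mul_assoc]
    ring
  by_cases hh : ∀ z : G, h z = 0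
  · intro y z
    have hi := hindep (g (y*z) - g y * g z) 0 ?_
    · linear_combination hi.1
    · convert key y z using 1
      funext x
      simp only [Pi.add_apply, Pi.smul_apply, smul_eq_mul, hh]
      ring
  · push_neg at hh
    obtain ⟨z₀, hz₀⟩ := hh
    set a : G → ℂ := fun y => (g (y*z₀) - g y * g z₀) / h z₀ with ha_def
    set b : G → ℂ := fun y => (h (y*z₀) - h y * g z₀) / h z₀ with hb_def
    have h5 : ∀ y : G, (fun x => h (x*y) - a y * f x - b y * h x) ∈ V := by
      intro y
      have := V.smul_mem (-(h z₀)⁻¹) (key y z₀)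
      convert this using 1
      funext x
      simp only [Pi.smul_apply, smul_eq_mul, ha_def, hb_def]
      field_simp
      ring
    have h67 : ∀ y z : G, g (y*z) = g y * g z + a y * h z ∧
        h (y*z) = h y * g z + b y * h z := by
      intro y z
      have comb := V.add_mem (key y z) (V.smul_mem (h z) (h5 y))
      have hi := hindep (g (y*z) - g y * g z - a y * h z)
        (h (y*z) - h y * g z - b y * h z) ?_
      · exact ⟨by linear_combination hi.1, by linear_combination hi.2⟩
      · convert comb using 1
        funext x
        simp only [Pi.add_apply, Pi.smul_apply, Pi.sub_apply, smul_eq_mul]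
        ring
    have h6 : ∀ y z : G, g (y*z) = g y * g z + a y * h z := fun y z => (h67 y z).1
    have h7 : ∀ y z : G, h (y*z) = h y * g z + b y * h z := fun y z => (h67 y z).2
    have haV : a ∈ V := by
      have := V.add_mem (V.smul_mem (h z₀)⁻¹ ((hV g hg z₀).1))
        (V.smul_mem (-(g z₀ / h z₀)) hg)
      convert this using 1
      funext y
      simp only [Pi.add_apply, Pi.smul_apply, smul_eq_mul, ha_def]
      field_simp
      ring
    have ha0 : ∀ y : G, a y = 0 := by
      by_contra hc
      push_neg at hc
      obtain ⟨y₀, hy₀⟩ := hc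
      have h9 : ∀ y z : G, a (y*z) = g y * a z + a y * b z := by
        intro y z
        have E1 := h6 (y*z) z₀
        have E2 := h6 y (z*z₀)
        rw [← mul_assoc] at E2
        have E3 := h6 z z₀
        have E4 := h7 z z₀
        have E5 := h6 y z
        have T : a (y*z) * h z₀ = (g y * a z + a y * b z) * h z₀ := by
          linear_combination (-(1:ℂ)) * E1 + E2 + g y * E3 + a y * E4 - g z₀ * E5
        exact mul_right_cancel₀ hz₀ T
      have hbV : b ∈ V := by
        have := V.add_mem (V.smul_mem (a y₀)⁻¹ ((hV a haV y₀).2))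
          (V.smul_mem (-(g y₀ / a y₀)) haV)
        convert this using 1
        funext z
        simp only [Pi.add_apply, Pi.smul_apply, smul_eq_mul]
        have := h9 y₀ z
        field_simp
        linear_combination (-(1:ℂ)) * this
      have haz : ∀ z : G, a z = 0 := by
        intro z
        have c2 := V.sub_mem (h5 z) (V.smul_mem (h z) hbV)
        have hi := hindep (-(a z)) (g z - b z) ?_
        · linear_combination (-(1:ℂ)) * hi.1
        · convert c2 using 1
          funext x
          simp only [Pi.add_apply, Pi.sub_apply, Pi.smul_apply, smul_eq_mul]
          have := h7 x z
          linear_combination (-(1:ℂ)) * this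
      exact hy₀ (haz y₀)
    intro x y
    rw [h6 x y, ha0 x]
    ring
end

section
/- Let G be a semigroup and V a two-sided invariant linear subspace of complex-valued functions on G. Let f, g, h : G → ℂ be such that f ≠ 0, f and h are linearly dependent modulo V with h ∉ V, and suppose that for every y ∈ G the function x ↦ f(xy) − f(x)g(y) − g(x)f(y) − h(x)h(y) belongs to V. Then f ∉ V. -/
theorem stmt_3 {G : Type*} [Semigroup G] (V : Submodule ℂ (G → ℂ))
    (hV : ∀ φ ∈ V, ∀ y : G, (fun x => φ (x * y)) ∈ V ∧ (fun x => φ (y * x)) ∈ V)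
    (f g h : G → ℂ) (hf : f ≠ 0)
    (hdep : ∃ l₁ l₂ : ℂ, (l₁ ≠ 0 ∨ l₂ ≠ 0) ∧ (l₁ • f + l₂ • h) ∈ V)
    (hhV : h ∉ V)
    (hmem : ∀ y : G, (fun x => f (x * y) - f x * g y - g x * f y - h x * h y) ∈ V) :
    f ∉ V := by
  intro hfV
  apply hhV
  have key : ∀ y : G, (f y • g + h y • h : G → ℂ) ∈ V := by
    intro y
    have h1 : (fun x => f (x * y)) ∈ V := (hV f hfV y).1
    have h2 : (g y • f : G → ℂ) ∈ V := V.smul_mem _ hfV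
    have := V.sub_mem (V.sub_mem h1 h2) (hmem y)
    convert this using 1
    funext x
    simp [mul_comm]
    ring
  by_cases hc : ∀ y₁ y₂ : G, f y₁ * h y₂ = f y₂ * h y₁
  · -- h is a pointwise multiple of f
    obtain ⟨y₀, hy₀⟩ : ∃ y₀, f y₀ ≠ 0 := by
      by_contra hn
      push_neg at hn
      exact hf (funext hn)
    have : h = (h y₀ / f y₀) • f := by
      funext y
      have h0 := hc y y₀
      rw [Pi.smul_apply, smul_eq_mul, div_mul_eq_mul_div, eq_div_iff hy₀]
      linear_combination -h0
    rw [this]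
    exact V.smul_mem _ hfV
  · push_neg at hc
    obtain ⟨y₁, y₂, hne⟩ := hc
    have h1 := key y₁
    have h2 := key y₂
    have h3 : ((f y₂ * h y₁ - f y₁ * h y₂) • h : G → ℂ) ∈ V := by
      have := V.sub_mem (V.smul_mem (f y₂) h1) (V.smul_mem (f y₁) h2)
      convert this using 1
      funext x
      simp
      ring
    have hnz : f y₂ * h y₁ - f y₁ * h y₂ ≠ 0 := fun hz => hne (by linear_combination -hz)
    have := V.smul_mem (f y₂ * h y₁ - f y₁ * h y₂)⁻¹ h3
    rwa [smul_smul, inv_mul_cancel₀ hnz, one_smul] at this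
end

section
/- Let G be a group with identity, m : G → ℂ a nonzero multiplicative function, and H : G → ℂ an unbounded function satisfying H(xy) = H(x)m(y) + H(y)m(x) for all x, y ∈ G. Then there exists a nonzero additive function a : G → ℂ (i.e., a(xy) = a(x) + a(y)) such that H = a·m. -/
theorem stmt_7 {G : Type*} [Group G]
    (m : G → ℂ) (hm : ∀ x y, m (x * y) = m x * m y) (hm0 : m ≠ 0)
    (H : G → ℂ) (hHunb : ¬ ∃ C : ℝ, ∀ x : G, ‖H x‖ ≤ C)
    (hH : ∀ x y : G, H (x * y) = H x * m y + H y * m x) :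
    ∃ a : G → ℂ, a ≠ 0 ∧ (∀ x y : G, a (x * y) = a x + a y) ∧
      ∀ x : G, H x = a x * m x := by
  have hmx : ∀ x, m x ≠ 0 := by
    obtain ⟨x0, hx0⟩ : ∃ x0, m x0 ≠ 0 := by
      by_contra h
      push_neg at h
      exact hm0 (funext h)
    intro x hx
    apply hx0
    have := hm x (x⁻¹ * x0)
    rw [mul_inv_cancel_left] at this
    rw [this, hx, zero_mul]
  refine ⟨fun x => H x / m x, ?_, ?_, ?_⟩
  · intro h
    apply hHunb
    refine ⟨0, fun x => ?_⟩
    have hx : H x / m x = 0 := congrFun h x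
    have : H x = 0 := by
      rcases (div_eq_zero_iff.mp hx) with h|h
      · exact h
      · exact absurd h (hmx x)
    rw [this, norm_zero]
  · intro x y
    show H (x * y) / m (x * y) = H x / m x + H y / m y
    rw [hH x y, hm x y]
    rw [div_add_div _ _ (hmx x) (hmx y)]
    ring
  · intro x
    rw [div_mul_cancel₀ _ (hmx x)]
end

section
/- Let G be a group, m : G → ℂ a nonzero bounded multiplicative function, a : G → ℂ an additive function, b : G → ℂ a bounded function, and λ ∈ ℂ a constant. Define f = a·m + φ, g = (1 − (λ²/2)a)·m − λb − (λ²/2)φ, and h = λ·a·m + b + λφ, where φ : G → ℂ is bounded. Then the function (x,y) ↦ f(xy) − f(x)g(y) − g(x)f(y) − h(x)h(y) is bounded on G × G. -/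
theorem stmt_8 {G : Type*} [Group G]
    (m : G → ℂ) (hm : ∀ x y, m (x * y) = m x * m y) (hm0 : m ≠ 0)
    (hmb : ∃ C : ℝ, ∀ x : G, ‖m x‖ ≤ C)
    (a : G → ℂ) (ha : ∀ x y, a (x * y) = a x + a y)
    (b : G → ℂ) (hb : ∃ C : ℝ, ∀ x : G, ‖b x‖ ≤ C)
    (φ : G → ℂ) (hφ : ∃ C : ℝ, ∀ x : G, ‖φ x‖ ≤ C)
    (lam : ℂ) (f g h : G → ℂ)
    (hf : ∀ x, f x = a x * m x + φ x)
    (hg : ∀ x, g x = (1 - lam ^ 2 / 2 * a x) * m x - lam * b x - lam ^ 2 / 2 * φ x)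
    (hh : ∀ x, h x = lam * a x * m x + b x + lam * φ x) :
    ∃ C : ℝ, ∀ x y : G,
      ‖f (x * y) - f x * g y - g x * f y - h x * h y‖ ≤ C := by
  obtain ⟨Cm, hCm⟩ := hmb
  obtain ⟨Cb, hCb⟩ := hb
  obtain ⟨Cp, hCp⟩ := hφ
  refine ⟨Cp + Cp * Cm + Cp * Cm + Cb * Cb, fun x y => ?_⟩
  have key : f (x * y) - f x * g y - g x * f y - h x * h y =
      φ (x * y) - φ x * m y - φ y * m x - b x * b y := by
    rw [hf, hf, hf, hg, hg, hh, hh, ha, hm]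
    ring
  rw [key]
  have hCm0 : (0:ℝ) ≤ Cm := le_trans (norm_nonneg _) (hCm 1)
  have hCp0 : (0:ℝ) ≤ Cp := le_trans (norm_nonneg _) (hCp 1)
  calc ‖φ (x * y) - φ x * m y - φ y * m x - b x * b y‖
      ≤ ‖φ (x * y) - φ x * m y - φ y * m x‖
        + ‖b x * b y‖ := norm_sub_le _ _
    _ ≤ ‖φ (x * y) - φ x * m y‖ + ‖φ y * m x‖
        + ‖b x * b y‖ := by
        gcongr; exact norm_sub_le _ _
    _ ≤ ‖φ (x * y)‖ + ‖φ x * m y‖ + ‖φ y * m x‖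
        + ‖b x * b y‖ := by
        gcongr; exact norm_sub_le _ _
    _ ≤ Cp + Cp * Cm + Cp * Cm + Cb * Cb := by
        have h1 := hCp (x * y)
        have h2 : ‖φ x * m y‖ ≤ Cp * Cm := by
          rw [norm_mul]; exact mul_le_mul (hCp x) (hCm y) (norm_nonneg _) hCp0
        have h3 : ‖φ y * m x‖ ≤ Cp * Cm := by
          rw [norm_mul]; exact mul_le_mul (hCp y) (hCm x) (norm_nonneg _) hCp0
        have h5 : ‖b x * b y‖ ≤ Cb * Cb := by
          rw [norm_mul]
          exact mul_le_mul (hCb x) (hCb y) (norm_nonneg _)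
            (le_trans (norm_nonneg _) (hCb 1))
        linarith
end

section
/- Let G be a group, α, λ ∈ ℂ constants, m : G → ℂ a multiplicative function, and b, φ : G → ℂ bounded functions. Define f = α·m − α·b, g = ((1 − αλ²)/2)·m + ((1 + αλ²)/2)·b − λφ, and h = αλ·m − αλ·b + φ. Then the function (x,y) ↦ f(xy) − f(x)g(y) − g(x)f(y) − h(x)h(y) is bounded on G × G. -/
theorem stmt_9 {G : Type*} [Group G] (α lam : ℂ)
    (m : G → ℂ) (hm : ∀ x y, m (x * y) = m x * m y)
    (b : G → ℂ) (hb : ∃ C : ℝ, ∀ x : G, ‖b x‖ ≤ C)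
    (φ : G → ℂ) (hφ : ∃ C : ℝ, ∀ x : G, ‖φ x‖ ≤ C)
    (f g h : G → ℂ)
    (hf : ∀ x, f x = α * m x - α * b x)
    (hg : ∀ x, g x = (1 - α * lam ^ 2) / 2 * m x + (1 + α * lam ^ 2) / 2 * b x - lam * φ x)
    (hh : ∀ x, h x = α * lam * m x - α * lam * b x + φ x) :
    ∃ C : ℝ, ∀ x y : G,
      ‖f (x * y) - f x * g y - g x * f y - h x * h y‖ ≤ C := by
  obtain ⟨Cb, hCb⟩ := hb
  obtain ⟨Cφ, hCφ⟩ := hφ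
  have hCb0 : 0 ≤ Cb := le_trans (norm_nonneg _) (hCb 1)
  have hCφ0 : 0 ≤ Cφ := le_trans (norm_nonneg _) (hCφ 1)
  refine ⟨‖α‖ * Cb + ‖α‖ * (Cb * Cb) + Cφ * Cφ, fun x y => ?_⟩
  have key : f (x * y) - f x * g y - g x * f y - h x * h y
      = (-α) * b (x * y) + α * (b x * b y) - φ x * φ y := by
    simp only [hf, hg, hh, hm]; ring
  rw [key]
  calc ‖(-α) * b (x * y) + α * (b x * b y) - φ x * φ y‖
      ≤ ‖(-α) * b (x * y) + α * (b x * b y)‖ + ‖φ x * φ y‖ :=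
        norm_sub_le _ _
    _ ≤ ‖(-α) * b (x * y)‖ + ‖α * (b x * b y)‖
        + ‖φ x * φ y‖ := by
        gcongr; exact norm_add_le _ _
    _ ≤ ‖α‖ * Cb + ‖α‖ * (Cb * Cb) + Cφ * Cφ := by
        simp only [norm_mul, norm_neg]
        gcongr
        · exact hCb _
        · exact hCb _
        · exact hCb _
        · exact hCφ _
        · exact hCφ _
end

section
/- Let G be a group, ρ ∈ ℂ, λ ∈ ℂ \ {0} constants, b : G → ℂ a bounded function, and f₀, g₀ : G → ℂ functions satisfying the cosine functional equation f₀(xy) = f₀(x)f₀(y) − g₀(x)g₀(y) for all x, y ∈ G. Define f = −λ²f₀ + λ²b, g = ((1+ρ²)/2)f₀ + ρg₀ + ((1−ρ²)/2)b, and h = λρf₀ + λg₀ − λρb. Then the function (x,y) ↦ f(xy) − f(x)g(y) − g(x)f(y) − h(x)h(y) is bounded on G × G. -/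
theorem stmt_11 {G : Type*} [Group G] (ρ : ℂ) (lam : ℂ) (hlam : lam ≠ 0)
    (b : G → ℂ) (hb : ∃ C : ℝ, ∀ x : G, ‖b x‖ ≤ C)
    (f₀ g₀ : G → ℂ)
    (hcos : ∀ x y : G, f₀ (x * y) = f₀ x * f₀ y - g₀ x * g₀ y)
    (f g h : G → ℂ)
    (hf : ∀ x, f x = -lam ^ 2 * f₀ x + lam ^ 2 * b x)
    (hg : ∀ x, g x = (1 + ρ ^ 2) / 2 * f₀ x + ρ * g₀ x + (1 - ρ ^ 2) / 2 * b x)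
    (hh : ∀ x, h x = lam * ρ * f₀ x + lam * g₀ x - lam * ρ * b x) :
    ∃ C : ℝ, ∀ x y : G,
      ‖f (x * y) - f x * g y - g x * f y - h x * h y‖ ≤ C := by
  obtain ⟨C, hC⟩ := hb
  set M : ℝ := max C 0 with hM
  have hbM : ∀ x, ‖b x‖ ≤ M := fun x => (hC x).trans (le_max_left _ _)
  have hM0 : 0 ≤ M := le_max_right _ _
  refine ⟨‖lam‖ ^ 2 * (M + M * M), fun x y => ?_⟩
  have key : f (x * y) - f x * g y - g x * f y - h x * h y
      = lam ^ 2 * (b (x * y) - b x * b y) := by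
    simp only [hf, hg, hh, hcos]; ring
  rw [key, norm_mul, norm_pow]
  gcongr
  calc ‖b (x * y) - b x * b y‖
      ≤ ‖b (x * y)‖ + ‖b x * b y‖ := by
        exact (norm_sub_le _ _)
    _ ≤ M + M * M := by
        rw [norm_mul]
        exact add_le_add (hbM _) (mul_le_mul (hbM x) (hbM y) (norm_nonneg _) hM0)
end

section
/- Let G be a group, β ∈ ℂ a constant, m : G → ℂ a nonzero bounded multiplicative function, a, a₁ : G → ℂ additive functions with a ≠ 0, and b : G → ℂ a bounded function. Define f = (1/2)a²·m + (1/2)a₁·m + b, g = −(1/4)β²a²·m + βa·m − (1/4)β²a₁·m + m − (1/2)β²b, and h = −(1/2)βa²·m + a·m − (1/2)βa₁·m − βb. Then the function (x,y) ↦ f(xy) − f(x)g(y) − g(x)f(y) − h(x)h(y) is bounded on G × G. -/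
theorem stmt_13 {G : Type*} [Group G] (β : ℂ)
    (m : G → ℂ) (hm : ∀ x y, m (x * y) = m x * m y) (hm0 : m ≠ 0)
    (hmb : ∃ C : ℝ, ∀ x : G, ‖m x‖ ≤ C)
    (a a₁ : G → ℂ) (ha : ∀ x y, a (x * y) = a x + a y)
    (ha₁ : ∀ x y, a₁ (x * y) = a₁ x + a₁ y) (ha0 : a ≠ 0)
    (b : G → ℂ) (hb : ∃ C : ℝ, ∀ x : G, ‖b x‖ ≤ C)
    (f g h : G → ℂ)
    (hf : ∀ x, f x = (1 / 2) * a x ^ 2 * m x + (1 / 2) * a₁ x * m x + b x)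
    (hg : ∀ x, g x = -(1 / 4) * β ^ 2 * a x ^ 2 * m x + β * a x * m x
      - (1 / 4) * β ^ 2 * a₁ x * m x + m x - (1 / 2) * β ^ 2 * b x)
    (hh : ∀ x, h x = -(1 / 2) * β * a x ^ 2 * m x + a x * m x
      - (1 / 2) * β * a₁ x * m x - β * b x) :
    ∃ C : ℝ, ∀ x y : G,
      ‖f (x * y) - f x * g y - g x * f y - h x * h y‖ ≤ C := by
  obtain ⟨Cm, hCm⟩ := hmb
  obtain ⟨Cb, hCb⟩ := hb
  refine ⟨Cb + Cb * Cm + Cm * Cb, fun x y => ?_⟩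
  have key : f (x * y) - f x * g y - g x * f y - h x * h y
      = b (x * y) - b x * m y - m x * b y := by
    rw [hf, hf, hf, hg, hg, hh, hh, hm x y, ha x y, ha₁ x y]; ring
  rw [key, sub_eq_add_neg, sub_eq_add_neg]
  refine le_trans (norm_add_le _ _) (add_le_add (le_trans (norm_add_le _ _)
    (add_le_add (hCb _) ?_)) ?_)
  · rw [norm_neg, norm_mul]
    exact mul_le_mul (hCb x) (hCm y) (norm_nonneg _)
      (le_trans (norm_nonneg _) (hCb x))
  · rw [norm_neg, norm_mul]
    exact mul_le_mul (hCm x) (hCb y) (norm_nonneg _)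
      (le_trans (norm_nonneg _) (hCm x))
end

section
/- Let G be a group, m : G → ℂ a nonzero bounded multiplicative function, a : G → ℂ an additive function, b : G → ℂ a bounded function, and set H = a·m + b and define ψ(x,y) = f(xy) − f(x)m(y) − m(x)f(y) − H(x)H(y) for a function f : G → ℂ. If ψ is bounded on G × G, then the function (x,y) ↦ f(xy)m((xy)⁻¹) − (1/2)a(xy)² − (f(x)m(x⁻¹) − (1/2)a(x)²) − (f(y)m(y⁻¹) − (1/2)a(y)²) − a(x)b(y)m(y⁻¹) − a(y)b(x)m(x⁻¹) is bounded on G × G. -/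
theorem stmt_16 {G : Type*} [Group G]
    (m : G → ℂ) (hm : ∀ x y, m (x * y) = m x * m y) (hm0 : m ≠ 0)
    (hmb : ∃ C : ℝ, ∀ x : G, norm (m x) ≤ C)
    (a : G → ℂ) (ha : ∀ x y, a (x * y) = a x + a y)
    (b : G → ℂ) (hb : ∃ C : ℝ, ∀ x : G, norm (b x) ≤ C)
    (H : G → ℂ) (hH : ∀ x, H x = a x * m x + b x)
    (f : G → ℂ) (ψ : G → G → ℂ)
    (hψ : ∀ x y, ψ x y = f (x * y) - f x * m y - m x * f y - H x * H y)
    (hψb : ∃ C : ℝ, ∀ x y : G, norm (ψ x y) ≤ C) :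
    ∃ C : ℝ, ∀ x y : G, norm
      (f (x * y) * m ((x * y)⁻¹) - (1 / 2) * a (x * y) ^ 2
        - (f x * m x⁻¹ - (1 / 2) * a x ^ 2)
        - (f y * m y⁻¹ - (1 / 2) * a y ^ 2)
        - a x * b y * m y⁻¹ - a y * b x * m x⁻¹) ≤ C := by
  obtain ⟨Cψ, hCψ⟩ := hψb
  obtain ⟨Cb, hCb⟩ := hb
  obtain ⟨Cm, hCm⟩ := hmb
  have hmz : ∀ x, m x ≠ 0 := by
    intro x hx
    apply hm0
    funext y
    have h : m y = m (y * x⁻¹) * m x := by rw [← hm]; group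
    simp [h, hx]
  have hm1 : m 1 = 1 := by
    have h := hm 1 1
    simp only [mul_one] at h
    have := hmz 1
    field_simp at h
    tauto
  have hinv : ∀ x : G, m x * m x⁻¹ = 1 := fun x => by
    rw [← hm, mul_inv_cancel, hm1]
  have habs : ∀ x : G, norm (m x) ≤ 1 := by
    intro x
    by_contra h
    push_neg at h
    have hpow : ∀ n : ℕ, m (x ^ n) = m x ^ n := by
      intro n
      induction n with
      | zero => simpa using hm1
      | succ n ih => rw [pow_succ, hm, ih, pow_succ]
    obtain ⟨n, hn⟩ := pow_unbounded_of_one_lt Cm h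
    have h2 := hCm (x ^ n)
    rw [hpow, norm_pow] at h2
    linarith
  have key : ∀ x y : G,
      (f (x * y) * m ((x * y)⁻¹) - (1 / 2) * a (x * y) ^ 2
        - (f x * m x⁻¹ - (1 / 2) * a x ^ 2)
        - (f y * m y⁻¹ - (1 / 2) * a y ^ 2)
        - a x * b y * m y⁻¹ - a y * b x * m x⁻¹)
      = ψ x y * m ((x * y)⁻¹) + b x * b y * (m x⁻¹ * m y⁻¹) := by
    intro x y
    have h1 := hinv x
    have h2 := hinv y
    have h3 : m ((x * y)⁻¹) = m y⁻¹ * m x⁻¹ := by rw [mul_inv_rev, hm]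
    rw [hψ, hH, hH, h3, ha]
    linear_combination (f y * m y⁻¹ + a x * b y * m y⁻¹ + a x * a y * m y * m y⁻¹) * h1
      + (f x * m x⁻¹ + a y * b x * m x⁻¹ + a x * a y) * h2
  have habsinv : ∀ x : G, norm (m x⁻¹) ≤ 1 := fun x => habs x⁻¹
  have hCψ0 : 0 ≤ Cψ := le_trans (norm_nonneg _) (hCψ 1 1)
  have hCb0 : 0 ≤ Cb := le_trans (norm_nonneg _) (hCb 1)
  refine ⟨Cψ + Cb * Cb, fun x y => ?_⟩
  rw [key]
  calc norm (ψ x y * m ((x * y)⁻¹) + b x * b y * (m x⁻¹ * m y⁻¹))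
      ≤ norm (ψ x y * m ((x * y)⁻¹)) + norm (b x * b y * (m x⁻¹ * m y⁻¹)) :=
        norm_add_le _ _
    _ ≤ Cψ + Cb * Cb := by
        have e1 : norm (ψ x y * m ((x * y)⁻¹)) ≤ Cψ * 1 := by
          rw [norm_mul]
          exact mul_le_mul (hCψ x y) (habs _) (norm_nonneg _) hCψ0
        have e2 : norm (b x * b y * (m x⁻¹ * m y⁻¹)) ≤ (Cb * Cb) * 1 := by
          rw [norm_mul, norm_mul, norm_mul]
          have hb1 : norm (m x⁻¹) * norm (m y⁻¹) ≤ 1 := by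
            calc norm (m x⁻¹) * norm (m y⁻¹) ≤ 1 * 1 :=
              mul_le_mul (habsinv x) (habsinv y) (norm_nonneg _) zero_le_one
            _ = 1 := one_mul 1
          exact mul_le_mul (mul_le_mul (hCb x) (hCb y) (norm_nonneg _) hCb0)
            hb1 (by positivity) (by positivity)
        linarith
end

section
/- Let G be a group, m : G → ℂ a nonzero bounded multiplicative function, a : G → ℂ a nonzero additive function, and f : G → ℂ a function such that the function (x,y) ↦ f(xy) − f(x)m(y) − m(x)f(y) − a(x)a(y)m(x)m(y) is bounded on G × G. Then the function (x,y) ↦ (2f(xy)m((xy)⁻¹) − a(xy)²) − (2f(x)m(x⁻¹) − a(x)²) − (2f(y)m(y⁻¹) − a(y)²) is bounded on G × G. -/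
theorem stmt_17 {G : Type*} [Group G]
    (m : G → ℂ) (hm : ∀ x y, m (x * y) = m x * m y) (hm0 : m ≠ 0)
    (hmb : ∃ C : ℝ, ∀ x : G, ‖m x‖ ≤ C)
    (a : G → ℂ) (ha : ∀ x y, a (x * y) = a x + a y) (ha0 : a ≠ 0)
    (f : G → ℂ)
    (hψb : ∃ C : ℝ, ∀ x y : G, ‖
      (f (x * y) - f x * m y - m x * f y - a x * a y * m x * m y)‖ ≤ C) :
    ∃ C : ℝ, ∀ x y : G, ‖
      ((2 * f (x * y) * m ((x * y)⁻¹) - a (x * y) ^ 2)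
        - (2 * f x * m x⁻¹ - a x ^ 2)
        - (2 * f y * m y⁻¹ - a y ^ 2))‖ ≤ C := by
  obtain ⟨C, hC⟩ := hψb
  obtain ⟨C₀, hC₀⟩ := hmb
  -- m 1 = 1
  have hm1 : m 1 = 1 := by
    have h1 : m 1 * m 1 = m 1 := by rw [← hm]; simp
    have h2 : m 1 * (m 1 - 1) = 0 := by ring_nf; linear_combination h1
    rcases mul_eq_zero.mp h2 with h | h
    · exfalso
      apply hm0
      funext x
      have := hm x 1
      simp only [mul_one, h, mul_zero] at this
      simpa using this
    · linear_combination h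
  have hinv : ∀ x : G, m x * m x⁻¹ = 1 := by
    intro x
    rw [← hm, mul_inv_cancel, hm1]
  have hmne : ∀ x : G, m x ≠ 0 := by
    intro x hx
    have := hinv x
    rw [hx, zero_mul] at this
    exact zero_ne_one this
  -- m of powers
  have hpow : ∀ (x : G) (n : ℕ), m (x ^ n) = m x ^ n := by
    intro x n
    induction n with
    | zero => simpa using hm1
    | succ k ih => rw [pow_succ, pow_succ, hm, ih]
  -- |m x| ≤ 1
  have habs1 : ∀ x : G, ‖m x‖ ≤ 1 := by
    intro x
    by_contra h
    push_neg at h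
    obtain ⟨n, hn⟩ := pow_unbounded_of_one_lt C₀ h
    have := hC₀ (x ^ n)
    rw [hpow, norm_pow] at this
    linarith
  have hCnn : 0 ≤ C := le_trans (norm_nonneg _) (hC 1 1)
  refine ⟨2 * C, fun x y => ?_⟩
  have hkey : (2 * f (x * y) * m ((x * y)⁻¹) - a (x * y) ^ 2)
        - (2 * f x * m x⁻¹ - a x ^ 2)
        - (2 * f y * m y⁻¹ - a y ^ 2)
      = 2 * m ((x * y)⁻¹) *
        (f (x * y) - f x * m y - m x * f y - a x * a y * m x * m y) := by
    have h1 : m ((x * y)⁻¹) = (m x * m y)⁻¹ := by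
      have := hinv (x * y)
      rw [hm] at this
      exact eq_inv_of_mul_eq_one_right this
    have h2 : m x⁻¹ = (m x)⁻¹ := eq_inv_of_mul_eq_one_right (hinv x)
    have h3 : m y⁻¹ = (m y)⁻¹ := eq_inv_of_mul_eq_one_right (hinv y)
    rw [h1, h2, h3, ha]
    field_simp [hmne x, hmne y]
    ring
  rw [hkey, norm_mul, norm_mul]
  simp only [Complex.norm_two]
  calc 2 * ‖m ((x * y)⁻¹)‖ *
        ‖f (x * y) - f x * m y - m x * f y - a x * a y * m x * m y‖
      ≤ 2 * 1 * C := by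
        apply mul_le_mul
        · have := habs1 (x * y)⁻¹; nlinarith [norm_nonneg (m ((x * y)⁻¹))]
        · exact hC x y
        · exact norm_nonneg _
        · linarith
    _ = 2 * C := by ring
end

section
/- Let G be a semigroup and V a two-sided invariant linear subspace of complex-valued functions on G. Let f, g, h : G → ℂ be linearly independent modulo V, define ψ(x,y) = f(xy) − f(x)g(y) − g(x)f(y) − h(x)h(y), and suppose that for every y ∈ G both functions x ↦ ψ(x,y) and x ↦ f(xy) − f(yx) belong to V. Then ψ(x,y) = 0 for all x, y ∈ G, i.e., f(xy) = f(x)g(y) + g(x)f(y) + h(x)h(y) for all x, y ∈ G. -/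
theorem stmt_18 {G : Type*} [Semigroup G] (V : Submodule ℂ (G → ℂ))
    (hV : ∀ φ ∈ V, ∀ y : G, (fun x => φ (x * y)) ∈ V ∧ (fun x => φ (y * x)) ∈ V)
    (f g h : G → ℂ)
    (hindep : ∀ l₁ l₂ l₃ : ℂ, (l₁ • f + l₂ • g + l₃ • h) ∈ V → l₁ = 0 ∧ l₂ = 0 ∧ l₃ = 0)
    (ψ : G → G → ℂ)
    (hψ : ∀ x y, ψ x y = f (x * y) - f x * g y - g x * f y - h x * h y)
    (hmem : ∀ y : G, (fun x => ψ x y) ∈ V)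
    (hcomm : ∀ y : G, (fun x => f (x * y) - f (y * x)) ∈ V) :
    ∀ x y : G, f (x * y) = f x * g y + g x * f y + h x * h y := by
  -- combination form of independence
  have hcomb : ∀ a b c : ℂ, (fun x => a * f x + b * g x + c * h x) ∈ V →
      a = 0 ∧ b = 0 ∧ c = 0 := by
    intro a b c hm
    refine hindep a b c ?_
    convert hm using 1
    funext x; simp only [Pi.add_apply, Pi.smul_apply, smul_eq_mul]
  -- f and h are pointwise linearly independent
  obtain ⟨z₁, z₂, hd⟩ : ∃ z₁ z₂, f z₁ * h z₂ - f z₂ * h z₁ ≠ 0 := by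
    by_contra hcon
    push_neg at hcon
    by_cases hz : ∀ z, h z = 0
    · have h1 : (1:ℂ) = 0 := by
        have := hcomb 0 0 1 (by
          have e : (fun x => (0:ℂ) * f x + 0 * g x + 1 * h x) = 0 :=
            funext fun x => by simp [hz x]
          rw [e]; exact V.zero_mem)
        exact this.2.2
      exact one_ne_zero h1
    · push_neg at hz
      obtain ⟨z₀, hz₀⟩ := hz
      have hf : ∀ z, f z = f z₀ / h z₀ * h z := by
        intro z
        field_simp
        linear_combination hcon z z₀
      have h1 : (1:ℂ) = 0 := by
        have := hcomb 1 0 (-(f z₀ / h z₀)) (by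
          have e : (fun x => (1:ℂ) * f x + 0 * g x + (-(f z₀ / h z₀)) * h x) = 0 :=
            funext fun x => by rw [one_mul, hf x]; ring_nf; simp
          rw [e]; exact V.zero_mem)
        exact this.1
      exact one_ne_zero h1
  set d := f z₁ * h z₂ - f z₂ * h z₁ with hddef
  -- key associativity identity, mod V
  have K : ∀ y z, (fun x => g (x*y) * f z + h (x*y) * h z
      - (g (y*z) - g y * g z) * f x - (f (y*z) - f y * g z) * g x
      - (h (y*z) - h y * g z) * h x) ∈ V := by
    intro y z
    have e : (fun x => g (x*y) * f z + h (x*y) * h z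
        - (g (y*z) - g y * g z) * f x - (f (y*z) - f y * g z) * g x
        - (h (y*z) - h y * g z) * h x)
        = fun x => ψ x (y*z) - g z * ψ x y - ψ (x*y) z := by
      funext x
      rw [hψ x (y*z), hψ x y, hψ (x*y) z, ← mul_assoc x y z]
      ring
    rw [e]
    exact V.sub_mem (V.sub_mem (hmem (y*z)) (V.smul_mem (g z) (hmem y)))
      ((hV _ (hmem z) y).1)
  -- translates of g and h lie in span{f,g,h} mod V
  have trans : ∀ y, ∃ a₁ b₁ c₁ a₂ b₂ c₂ : ℂ,
      (fun x => g (x*y) - (a₁ * f x + b₁ * g x + c₁ * h x)) ∈ V ∧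
      (fun x => h (x*y) - (a₂ * f x + b₂ * g x + c₂ * h x)) ∈ V := by
    intro y
    refine ⟨(h z₂*(g (y*z₁) - g y*g z₁) - h z₁*(g (y*z₂) - g y*g z₂))/d,
            (h z₂*(f (y*z₁) - f y*g z₁) - h z₁*(f (y*z₂) - f y*g z₂))/d,
            (h z₂*(h (y*z₁) - h y*g z₁) - h z₁*(h (y*z₂) - h y*g z₂))/d,
            (f z₁*(g (y*z₂) - g y*g z₂) - f z₂*(g (y*z₁) - g y*g z₁))/d,
            (f z₁*(f (y*z₂) - f y*g z₂) - f z₂*(f (y*z₁) - f y*g z₁))/d,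
            (f z₁*(h (y*z₂) - h y*g z₂) - f z₂*(h (y*z₁) - h y*g z₁))/d, ?_, ?_⟩
    · have m := V.smul_mem d⁻¹
        (V.sub_mem (V.smul_mem (h z₂) (K y z₁)) (V.smul_mem (h z₁) (K y z₂)))
      convert m using 1
      funext x
      simp only [Pi.smul_apply, Pi.sub_apply, smul_eq_mul]
      field_simp
      ring
    · have m := V.smul_mem d⁻¹
        (V.sub_mem (V.smul_mem (f z₁) (K y z₂)) (V.smul_mem (f z₂) (K y z₁)))
      convert m using 1
      funext x
      simp only [Pi.smul_apply, Pi.sub_apply, smul_eq_mul]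
      field_simp
      ring
  -- exact representation of ψ in the first variable
  have rep : ∀ y, ∃ p q : ℂ, ∀ z, ψ y z = p * f z + q * h z := by
    intro y
    obtain ⟨a₁, b₁, c₁, a₂, b₂, c₂, hG, hH⟩ := trans y
    refine ⟨b₁ - g y, b₂ - h y, fun z => ?_⟩
    have comb : (fun x => ((g (y*z) - g y * g z) - (f z * a₁ + h z * a₂)) * f x
        + ((f (y*z) - f y * g z) - (f z * b₁ + h z * b₂)) * g x
        + ((h (y*z) - h y * g z) - (f z * c₁ + h z * c₂)) * h x) ∈ V := by
      have m := V.sub_mem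
        (V.add_mem (V.smul_mem (f z) hG) (V.smul_mem (h z) hH)) (K y z)
      convert m using 1
      funext x
      simp only [Pi.smul_apply, Pi.add_apply, Pi.sub_apply, smul_eq_mul]
      ring
    have hB := (hcomb _ _ _ comb).2.1
    rw [hψ y z]
    linear_combination hB
  -- conclude via near-symmetry
  intro x y
  obtain ⟨p, q, hpq⟩ := rep x
  have s1 : (fun t => ψ t x - ψ x t) ∈ V := by
    have e : (fun t => ψ t x - ψ x t) = fun t => f (t*x) - f (x*t) :=
      funext fun t => by rw [hψ t x, hψ x t]; ring
    rw [e]; exact hcomm x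
  have s2 : (fun t => p * f t + 0 * g t + q * h t) ∈ V := by
    have m := V.sub_mem (hmem x) s1
    convert m using 1
    funext t
    simp only [Pi.sub_apply]
    linear_combination -hpq t
  obtain ⟨hp, -, hq⟩ := hcomb p 0 q s2
  have h0 : ψ x y = 0 := by rw [hpq y, hp, hq]; ring
  have e := hψ x y
  rw [h0] at e
  linear_combination -e
end
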